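/- arXiv:2603.27640 — 3 statements merged into one kernel-verified Lean document; each statement's English description precedes it below -/
import Mathlib

section
/- Let α > 1 and M ∈ ℕ₊, and let D_M ∈ (0,1] be the unique solution of ∑_{i=M}^∞ ((α−1)/α^i)^D = 1. Then lim_{M→∞} D_M = 0. -/
open Real Filter Set

/-- Let α > 1, and for each M ∈ ℕ₊ let D_M ∈ (0,1] be the (unique)
solution of ∑_{i=M}^∞ ((α−1)/α^i)^D = 1. Then D_M → 0 as M → ∞.
Here the sum over i ≥ M is written as a sum over j : ℕ with i = M + j. -/
theorem stmt_8 (α : ℝ) (hα : 1 < α) (D : ℕ → ℝ)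
    (hD : ∀ M : ℕ, 1 ≤ M → D M ∈ Set.Ioc (0 : ℝ) 1 ∧
      (∑' j : ℕ, ((α - 1) / α ^ (M + j)) ^ (D M)) = 1) :
    Tendsto D atTop (nhds 0) := by
  have hα0 : (0:ℝ) < α := lt_trans one_pos hα
  have hα1 : (0:ℝ) < α - 1 := sub_pos.2 hα
  rw [tendsto_order]
  constructor
  · intro a ha
    filter_upwards [eventually_ge_atTop 1] with M hM
    exact lt_trans ha (hD M hM).1.1
  · intro ε hε
    set ε' := min ε 1 with hε'def
    have hε'0 : 0 < ε' := lt_min hε one_pos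
    have hε'1 : ε' ≤ 1 := min_le_right _ _
    set r := (α ^ ε')⁻¹ with hrdef
    have hαε : 1 < α ^ ε' := Real.one_lt_rpow_iff_of_pos hα0 |>.2 (Or.inl ⟨hα, hε'0⟩)
    have hr0 : 0 ≤ r := inv_nonneg.2 (le_of_lt (lt_trans one_pos hαε))
    have hr1 : r < 1 := inv_lt_one_of_one_lt₀ hαε
    have key : ∀ M : ℕ, ∀ j : ℕ,
        ((α - 1) / α ^ (M + j)) ^ ε' = ((α - 1) / α ^ M) ^ ε' * r ^ j := by
      intro M j
      have h1 : (α - 1) / α ^ (M + j) = ((α - 1) / α ^ M) * (α⁻¹) ^ j := by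
        rw [pow_add]
        field_simp
        rw [one_div, ← mul_pow, mul_inv_cancel₀ hα0.ne', one_pow]
      rw [h1, Real.mul_rpow (by positivity) (by positivity)]
      congr 1
      rw [← Real.rpow_natCast (α⁻¹) j, ← Real.rpow_mul (by positivity),
        mul_comm, Real.rpow_mul (by positivity), Real.rpow_natCast,
        Real.inv_rpow (le_of_lt hα0)]
    have hsummable : ∀ M : ℕ, Summable (fun j : ℕ => ((α - 1) / α ^ (M + j)) ^ ε') := by
      intro M
      have : Summable (fun j : ℕ => ((α - 1) / α ^ M) ^ ε' * r ^ j) :=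
        (summable_geometric_of_lt_one hr0 hr1).mul_left _
      exact this.congr (fun j => (key M j).symm)
    have htsum : ∀ M : ℕ, (∑' j : ℕ, ((α - 1) / α ^ (M + j)) ^ ε')
        = ((α - 1) / α ^ M) ^ ε' * (1 - r)⁻¹ := by
      intro M
      calc (∑' j : ℕ, ((α - 1) / α ^ (M + j)) ^ ε')
          = ∑' j : ℕ, ((α - 1) / α ^ M) ^ ε' * r ^ j := by
            exact tsum_congr (key M)
        _ = ((α - 1) / α ^ M) ^ ε' * ∑' j : ℕ, r ^ j := tsum_mul_left
        _ = ((α - 1) / α ^ M) ^ ε' * (1 - r)⁻¹ := by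
            rw [tsum_geometric_of_lt_one hr0 hr1]
    -- the closed form tends to 0
    have hform : ∀ M : ℕ, ((α - 1) / α ^ M) ^ ε' = (α - 1) ^ ε' * r ^ M := by
      intro M
      rw [Real.div_rpow (le_of_lt hα1) (by positivity)]
      rw [← Real.rpow_natCast α M, ← Real.rpow_mul (le_of_lt hα0),
        mul_comm, Real.rpow_mul (le_of_lt hα0), Real.rpow_natCast]
      rw [div_eq_mul_inv, ← inv_pow]
    have htend : Tendsto (fun M : ℕ => ((α - 1) / α ^ M) ^ ε' * (1 - r)⁻¹)
        atTop (nhds 0) := by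
      have h1 : Tendsto (fun M : ℕ => r ^ M) atTop (nhds 0) :=
        tendsto_pow_atTop_nhds_zero_of_lt_one hr0 hr1
      have h2 : Tendsto (fun M : ℕ => (α - 1) ^ ε' * r ^ M * (1 - r)⁻¹)
          atTop (nhds 0) := by
        have := (h1.const_mul ((α - 1) ^ ε')).mul_const ((1 - r)⁻¹)
        simpa using this
      exact h2.congr (fun M => by rw [hform M])
    have hev : ∀ᶠ M : ℕ in atTop,
        ((α - 1) / α ^ M) ^ ε' * (1 - r)⁻¹ < 1 :=
      htend.eventually_lt_const one_pos
    filter_upwards [eventually_ge_atTop 1, hev] with M hM hltM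
    by_contra hcon
    push_neg at hcon
    have hεD : ε' ≤ D M := le_trans (min_le_left _ _) (by exact_mod_cast hcon)
    obtain ⟨⟨hD0, hD1⟩, hsum⟩ := hD M hM
    have hle : ∀ j : ℕ, ((α - 1) / α ^ (M + j)) ^ (D M)
        ≤ ((α - 1) / α ^ (M + j)) ^ ε' := by
      intro j
      apply Real.rpow_le_rpow_of_exponent_ge
      · positivity
      · rw [div_le_one (by positivity)]
        calc α - 1 ≤ α := by linarith
          _ ≤ α ^ (M + j) := le_self_pow₀ hα.le (by omega)
      · exact hεD
    have hsumD : Summable (fun j : ℕ => ((α - 1) / α ^ (M + j)) ^ (D M)) := by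
      by_contra hns
      rw [tsum_eq_zero_of_not_summable hns] at hsum
      norm_num at hsum
    have : (1:ℝ) ≤ ((α - 1) / α ^ M) ^ ε' * (1 - r)⁻¹ := by
      calc (1:ℝ) = ∑' j : ℕ, ((α - 1) / α ^ (M + j)) ^ (D M) := hsum.symm
        _ ≤ ∑' j : ℕ, ((α - 1) / α ^ (M + j)) ^ ε' :=
            Summable.tsum_le_tsum hle hsumD (hsummable M)
        _ = _ := htsum M
    linarith
end

section
/- Fix α > 1 and let P(t,q) = log( e^{−t·log(α/(α−1)) + q} / (1 − e^{−t·log α + q}) ). For every β > 1, the pair t(β) = ((1−β)·log(β−1) + β·log β) / (−log(α−1) + β·log α) and q(β) = t(β)·log α + log((β−1)/β) solves the system P(t, q) = qβ and ∂P/∂q(t, q) = β. -/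
open Real Filter Set

/-- With P(t,q) = log( e^{−t log(α/(α−1)) + q} / (1 − e^{−t log α + q}) ),
for every β > 1 the pair t(β), q(β) given below lies in the domain e^{−t log α + q} < 1
and solves P(t,q) = qβ and ∂P/∂q(t,q) = β. -/
theorem stmt_12 (α : ℝ) (hα : 1 < α) (β : ℝ) (hβ : 1 < β) :
    let P : ℝ → ℝ → ℝ := fun t q =>
      Real.log (Real.exp (-t * Real.log (α / (α - 1)) + q) /
        (1 - Real.exp (-t * Real.log α + q)))
    let t : ℝ := ((1 - β) * Real.log (β - 1) + β * Real.log β) /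
      (-Real.log (α - 1) + β * Real.log α)
    let q : ℝ := t * Real.log α + Real.log ((β - 1) / β)
    Real.exp (-t * Real.log α + q) < 1 ∧
    P t q = q * β ∧
    HasDerivAt (fun q' => P t q') β q := by
  intro P t q
  have hα0 : (0:ℝ) < α - 1 := by linarith
  have hβ0 : (0:ℝ) < β - 1 := by linarith
  have hβpos : (0:ℝ) < β := by linarith
  have hD : 0 < -Real.log (α - 1) + β * Real.log α := by
    have h1 : Real.log (α - 1) < Real.log α := Real.log_lt_log hα0 (by linarith)
    have h2 : 0 < Real.log α := Real.log_pos hα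
    nlinarith
  have hq : -t * Real.log α + q = Real.log ((β - 1) / β) := by
    simp only [q]; ring
  have hE : Real.exp (-t * Real.log α + q) = (β - 1) / β := by
    rw [hq, Real.exp_log (by positivity)]
  have hE1 : Real.exp (-t * Real.log α + q) < 1 := by
    rw [hE, div_lt_one hβpos]; linarith
  have hone : 1 - Real.exp (-t * Real.log α + q) = 1 / β := by
    rw [hE]; field_simp; ring
  have ht : t * (-Real.log (α - 1) + β * Real.log α)
      = (1 - β) * Real.log (β - 1) + β * Real.log β := by
    simp only [t]; field_simp
  have hqd : q = t * Real.log α + (Real.log (β - 1) - Real.log β) := by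
    simp only [q]; rw [Real.log_div (ne_of_gt hβ0) (ne_of_gt hβpos)]
  clear_value q t
  refine ⟨hE1, ?_, ?_⟩
  · show Real.log (Real.exp (-t * Real.log (α / (α - 1)) + q) /
        (1 - Real.exp (-t * Real.log α + q))) = q * β
    rw [hone, Real.log_div (Real.exp_ne_zero _) (by positivity), Real.log_exp,
      Real.log_div one_ne_zero (ne_of_gt hβpos), Real.log_one]
    have hlog : Real.log (α / (α - 1)) = Real.log α - Real.log (α - 1) :=
      Real.log_div (by linarith) (ne_of_gt hα0)
    rw [hlog, hqd]
    linear_combination -ht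
  · set E := Real.exp (-t * Real.log α + q) with hEdef
    have hone' : 1 - E ≠ 0 := by rw [hone]; positivity
    have hexp : HasDerivAt (fun q' => Real.exp (-t * Real.log α + q')) E q := by
      have h := ((hasDerivAt_id q).const_add (-t * Real.log α)).exp
      rw [hEdef]
      simpa [neg_mul] using h
    have h1m : HasDerivAt (fun q' => 1 - Real.exp (-t * Real.log α + q')) (-E) q := by
      have h := (hasDerivAt_const q (1:ℝ)).sub hexp
      rw [zero_sub] at h
      exact h
    have hlogd : HasDerivAt (fun q' => Real.log (1 - Real.exp (-t * Real.log α + q')))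
        ((-E) / (1 - E)) q := h1m.log hone'
    have hg : HasDerivAt (fun q' => (-t * Real.log (α / (α - 1)) + q')
        - Real.log (1 - Real.exp (-t * Real.log α + q'))) (1 - (-E) / (1 - E)) q :=
      ((hasDerivAt_id q).const_add (-t * Real.log (α / (α - 1)))).sub hlogd
    have hval : 1 - (-E) / (1 - E) = β := by
      rw [hone, hE]; field_simp; ring
    have hcont : ContinuousAt (fun q' => Real.exp (-t * Real.log α + q')) q := by
      fun_prop
    have hopen : ∀ᶠ q' in nhds q, Real.exp (-t * Real.log α + q') < 1 :=
      hcont (Iio_mem_nhds hE1)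
    have heq : (fun q' => (-t * Real.log (α / (α - 1)) + q')
        - Real.log (1 - Real.exp (-t * Real.log α + q'))) =ᶠ[nhds q]
        (fun q' => P t q') := by
      filter_upwards [hopen] with x hx
      have hne : 1 - Real.exp (-t * Real.log α + x) ≠ 0 := by
        have : Real.exp (-t * Real.log α + x) < 1 := hx
        intro h; linarith [sub_eq_zero.mp h]
      simp only [P]
      rw [Real.log_div (Real.exp_ne_zero _) hne, Real.log_exp]
    rw [← hval]
    exact hg.congr_of_eventuallyEq heq.symm
end

section
/- Let α > 1 and define κ : (1, ∞) → ℝ by κ(x) = ((1−x)·log(x−1) + x·log x) / (−log(α−1) + x·log α). Then κ is differentiable, positive on (1,∞), attains its maximum value 1 at x = α/(α−1), and satisfies lim_{x→1⁺} κ(x) = 0 and lim_{x→∞} κ(x) = 0. -/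
open Real Filter Set

private lemma aux_shift_deriv {x : ℝ} (hx : x ≠ 1) :
    HasDerivAt (fun t : ℝ => (t - 1) * Real.log (t - 1)) (Real.log (x - 1) + 1) x := by
  have h1 : x - 1 ≠ 0 := sub_ne_zero.mpr hx
  have h := (Real.hasDerivAt_mul_log h1).comp x ((hasDerivAt_id x).sub_const 1)
  simpa [Function.comp_def] using h

private lemma aux_N_deriv {x : ℝ} (hx : 1 < x) :
    HasDerivAt (fun t : ℝ => (1 - t) * Real.log (t - 1) + t * Real.log t)
      (Real.log x - Real.log (x - 1)) x := by
  have h1 := (aux_shift_deriv hx.ne').neg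
  have h2 := Real.hasDerivAt_mul_log (show x ≠ 0 by linarith)
  have h := h1.add h2
  have hfun : (fun t : ℝ => (1 - t) * Real.log (t - 1) + t * Real.log t)
      = (fun t : ℝ => -((t - 1) * Real.log (t - 1)) + t * Real.log t) := by
    funext t; ring
  rw [hfun]
  exact h.congr_deriv (by ring)

private lemma aux_D_deriv (c la x : ℝ) : HasDerivAt (fun t : ℝ => -c + t * la) la x := by
  simpa using ((hasDerivAt_id x).mul_const la).const_add (-c)

private lemma aux_D_pos {α : ℝ} (hα : 1 < α) {x : ℝ} (hx : 1 < x) :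
    0 < -Real.log (α - 1) + x * Real.log α := by
  have hla : 0 < Real.log α := Real.log_pos hα
  have hc : Real.log (α - 1) < Real.log α := Real.log_lt_log (by linarith) (by linarith)
  nlinarith

private lemma aux_N_pos {x : ℝ} (hx : 1 < x) :
    0 < (1 - x) * Real.log (x - 1) + x * Real.log x := by
  have hlx : 0 < Real.log x := Real.log_pos hx
  rcases lt_or_ge x 2 with h | h
  · have h1 : Real.log (x - 1) < 0 := Real.log_neg (by linarith) (by linarith)
    nlinarith
  · have h2 : 0 ≤ Real.log (x - 1) := Real.log_nonneg (by linarith)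
    have h3 : Real.log (x - 1) < Real.log x := Real.log_lt_log (by linarith) (by linarith)
    nlinarith

private lemma aux_N_le_D {α : ℝ} (hα : 1 < α) {x : ℝ} (hx : 1 < x) :
    (1 - x) * Real.log (x - 1) + x * Real.log x ≤ -Real.log (α - 1) + x * Real.log α := by
  have hα1 : 0 < α - 1 := by linarith
  have hα0 : 0 < α := by linarith
  set g : ℝ → ℝ := fun t => (-Real.log (α - 1) + t * Real.log α)
      - ((1 - t) * Real.log (t - 1) + t * Real.log t) with hg
  rw [← sub_nonneg]
  show 0 ≤ g x
  have hx₀ : 1 < α / (α - 1) := (one_lt_div hα1).mpr (by linarith)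
  set x₀ : ℝ := α / (α - 1) with hx₀def
  have hderiv : ∀ y : ℝ, 1 < y →
      HasDerivAt g (Real.log α + Real.log (y - 1) - Real.log y) y := by
    intro y hy
    have h := (aux_D_deriv (Real.log (α - 1)) (Real.log α) y).sub (aux_N_deriv hy)
    exact h.congr_deriv (by ring)
  have hgx₀ : g x₀ = 0 := by
    have h1 : x₀ - 1 = 1 / (α - 1) := by
      rw [hx₀def]; field_simp; ring
    have h2 : Real.log x₀ = Real.log α - Real.log (α - 1) := by
      rw [hx₀def]; exact Real.log_div hα0.ne' hα1.ne'
    have h3 : Real.log (x₀ - 1) = -Real.log (α - 1) := by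
      rw [h1, one_div, Real.log_inv]
    simp only [hg]
    rw [h3, h2]
    ring
  rcases le_total x x₀ with hle | hle
  · have hcont : ContinuousOn g (Set.Ioc 1 x₀) := fun y hy =>
      ((hderiv y hy.1).differentiableAt.continuousAt).continuousWithinAt
    have hanti : StrictAntiOn g (Set.Ioc 1 x₀) := by
      apply strictAntiOn_of_deriv_neg (convex_Ioc 1 x₀) hcont
      intro y hy
      rw [interior_Ioc] at hy
      obtain ⟨hy1, hy2⟩ := hy
      rw [(hderiv y hy1).deriv]
      have h4 : Real.log α + Real.log (y - 1) = Real.log (α * (y - 1)) :=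
        (Real.log_mul hα0.ne' (sub_ne_zero.mpr hy1.ne')).symm
      have h5 : α * (y - 1) < y := by
        have h5' : y * (α - 1) < α := (lt_div_iff₀ hα1).mp hy2
        nlinarith
      have h6 : 0 < α * (y - 1) := mul_pos hα0 (by linarith)
      have h7 := Real.log_lt_log h6 h5
      rw [sub_neg, h4]
      exact h7
    rcases eq_or_lt_of_le hle with heq | hlt
    · rw [heq, hgx₀]
    · have h := hanti ⟨hx, hle⟩ ⟨hx₀, le_refl _⟩ hlt
      rw [hgx₀] at h
      exact h.le
  · have hcont : ContinuousOn g (Set.Ici x₀) := fun y hy =>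
      ((hderiv y (hx₀.trans_le hy)).differentiableAt.continuousAt).continuousWithinAt
    have hdiff : DifferentiableOn ℝ g (interior (Set.Ici x₀)) := by
      rw [interior_Ici]
      exact fun y hy => ((hderiv y (hx₀.trans hy)).differentiableAt).differentiableWithinAt
    have hmono : MonotoneOn g (Set.Ici x₀) := by
      apply monotoneOn_of_deriv_nonneg (convex_Ici x₀) hcont hdiff
      intro y hy
      rw [interior_Ici] at hy
      have hy1 : 1 < y := hx₀.trans hy
      rw [(hderiv y hy1).deriv]
      have h4 : Real.log α + Real.log (y - 1) = Real.log (α * (y - 1)) :=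
        (Real.log_mul hα0.ne' (sub_ne_zero.mpr hy1.ne')).symm
      have h5 : y ≤ α * (y - 1) := by
        have h5' : α < y * (α - 1) := (div_lt_iff₀ hα1).mp hy
        nlinarith
      have h7 := Real.log_le_log (by linarith : (0:ℝ) < y) h5
      rw [sub_nonneg, h4]
      exact h7
    have h := hmono Set.self_mem_Ici hle hle
    rw [hgx₀] at h
    exact h

private lemma aux_N_upper {x : ℝ} (hx : 2 ≤ x) :
    (1 - x) * Real.log (x - 1) + x * Real.log x ≤ 2 + Real.log x := by
  have hx1 : 1 < x := by linarith
  have hx10 : 0 < x - 1 := by linarith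
  have hlogdiv : Real.log x - Real.log (x - 1) = Real.log (x / (x - 1)) :=
    (Real.log_div (by linarith) (by linarith)).symm
  have h2 : Real.log (x / (x - 1)) ≤ x / (x - 1) - 1 :=
    Real.log_le_sub_one_of_pos (by positivity)
  have h3 : x / (x - 1) - 1 = 1 / (x - 1) := by field_simp; ring
  have h4 : x * Real.log (x / (x - 1)) ≤ x * (1 / (x - 1)) :=
    mul_le_mul_of_nonneg_left (by rw [← h3]; exact h2) (by linarith)
  have h5 : x * (1 / (x - 1)) ≤ 2 := by
    rw [mul_one_div, div_le_iff₀ hx10]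
    linarith
  have h6 : Real.log (x - 1) ≤ Real.log x := Real.log_le_log hx10 (by linarith)
  have hN : (1 - x) * Real.log (x - 1) + x * Real.log x
      = x * (Real.log x - Real.log (x - 1)) + Real.log (x - 1) := by ring
  rw [hN, hlogdiv]
  linarith

/-- For α > 1, the Khintchine spectrum
κ(x) = ((1−x)log(x−1) + x log x)/(−log(α−1) + x log α) is differentiable and positive
on (1,∞), attains its maximum value 1 at x = α/(α−1), and tends to 0 as x → 1⁺ and
as x → ∞. -/
theorem stmt_13 (α : ℝ) (hα : 1 < α) :
    let κ : ℝ → ℝ := fun x =>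
      ((1 - x) * Real.log (x - 1) + x * Real.log x) /
        (-Real.log (α - 1) + x * Real.log α)
    DifferentiableOn ℝ κ (Set.Ioi 1) ∧
    (∀ x ∈ Set.Ioi (1 : ℝ), 0 < κ x) ∧
    κ (α / (α - 1)) = 1 ∧
    (∀ x ∈ Set.Ioi (1 : ℝ), κ x ≤ 1) ∧
    Tendsto κ (nhdsWithin 1 (Set.Ioi 1)) (nhds 0) ∧
    Tendsto κ atTop (nhds 0) := by
  intro κ
  have hα1 : 0 < α - 1 := by linarith
  have hα0 : 0 < α := by linarith
  have hla : 0 < Real.log α := Real.log_pos hα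
  have hc : Real.log (α - 1) < Real.log α := Real.log_lt_log hα1 (by linarith)
  refine ⟨?_, ?_, ?_, ?_, ?_, ?_⟩
  · -- differentiability
    intro x hx
    have hx1 : 1 < x := hx
    have hN := aux_N_deriv hx1
    have hD := aux_D_deriv (Real.log (α - 1)) (Real.log α) x
    exact ((hN.div hD (aux_D_pos hα hx1).ne').differentiableAt).differentiableWithinAt
  · -- positivity
    intro x hx
    exact div_pos (aux_N_pos hx) (aux_D_pos hα hx)
  · -- value at α/(α-1)
    have hx₀ : 1 < α / (α - 1) := (one_lt_div hα1).mpr (by linarith)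
    have h1 : α / (α - 1) - 1 = 1 / (α - 1) := by field_simp; ring
    have h2 : Real.log (α / (α - 1)) = Real.log α - Real.log (α - 1) :=
      Real.log_div hα0.ne' hα1.ne'
    have h3 : Real.log (α / (α - 1) - 1) = -Real.log (α - 1) := by
      rw [h1, one_div, Real.log_inv]
    show ((1 - α / (α - 1)) * Real.log (α / (α - 1) - 1)
        + α / (α - 1) * Real.log (α / (α - 1))) /
        (-Real.log (α - 1) + α / (α - 1) * Real.log α) = 1
    rw [h3, h2]
    rw [show (1 - α / (α - 1)) * -Real.log (α - 1)
        + α / (α - 1) * (Real.log α - Real.log (α - 1))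
        = -Real.log (α - 1) + α / (α - 1) * Real.log α from by ring]
    exact div_self (aux_D_pos hα hx₀).ne'
  · -- ≤ 1
    intro x hx
    exact div_le_one_of_le₀ (aux_N_le_D hα hx) (aux_D_pos hα hx).le
  · -- limit at 1⁺
    have hNlim : Tendsto (fun x : ℝ => (1 - x) * Real.log (x - 1) + x * Real.log x)
        (nhdsWithin 1 (Set.Ioi 1)) (nhds 0) := by
      have hc1 : ContinuousAt (fun x : ℝ => (1 - x) * Real.log (x - 1) + x * Real.log x) 1 := by
        have hA : ContinuousAt (fun x : ℝ => -((x - 1) * Real.log (x - 1))) 1 := by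
          have h : Continuous (fun x : ℝ => (x - 1) * Real.log (x - 1)) :=
            Real.continuous_mul_log.comp (continuous_sub_right 1)
          exact h.neg.continuousAt
        have hB : ContinuousAt (fun x : ℝ => x * Real.log x) 1 :=
          Real.continuous_mul_log.continuousAt
        have := hA.add hB
        refine this.congr ?_
        filter_upwards with t
        simp only [Pi.add_apply]
        ring
      have h0 : (1 - (1:ℝ)) * Real.log ((1:ℝ) - 1) + 1 * Real.log 1 = 0 := by simp
      have := hc1.tendsto.mono_left (nhdsWithin_le_nhds :
        nhdsWithin (1:ℝ) (Set.Ioi 1) ≤ nhds 1)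
      rwa [h0] at this
    have hDlim : Tendsto (fun x : ℝ => -Real.log (α - 1) + x * Real.log α)
        (nhdsWithin 1 (Set.Ioi 1)) (nhds (-Real.log (α - 1) + 1 * Real.log α)) := by
      have : ContinuousAt (fun x : ℝ => -Real.log (α - 1) + x * Real.log α) 1 := by
        fun_prop
      exact this.tendsto.mono_left nhdsWithin_le_nhds
    have hDne : -Real.log (α - 1) + 1 * Real.log α ≠ 0 := by
      rw [one_mul]; linarith
    have := hNlim.div hDlim hDne
    rw [zero_div] at this; exact this
  · -- limit at infinity
    have hupper : Tendsto (fun x : ℝ => (2 + Real.log x) / (-Real.log (α - 1) + x * Real.log α))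
        atTop (nhds 0) := by
      have h1 : Tendsto (fun x : ℝ => Real.log x ^ 1 / (Real.log α * x + -Real.log (α - 1)))
          atTop (nhds 0) := Real.tendsto_pow_log_div_mul_add_atTop (Real.log α)
          (-Real.log (α - 1)) 1 hla.ne'
      have h2 : Tendsto (fun x : ℝ => Real.log α * x + -Real.log (α - 1)) atTop atTop := by
        apply tendsto_atTop_add_const_right
        exact (tendsto_id.const_mul_atTop hla)
      have h3 : Tendsto (fun x : ℝ => 2 * (Real.log α * x + -Real.log (α - 1))⁻¹)
          atTop (nhds 0) := by
        have := h2.inv_tendsto_atTop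
        simpa using this.const_mul 2
      have h4 := h3.add h1
      rw [add_zero] at h4
      refine h4.congr (fun x => ?_)
      rw [pow_one]
      ring
    have hlow : Tendsto (fun _ : ℝ => (0:ℝ)) atTop (nhds 0) := tendsto_const_nhds
    refine tendsto_of_tendsto_of_tendsto_of_le_of_le' hlow hupper ?_ ?_
    · filter_upwards [eventually_ge_atTop (2:ℝ)] with x hx
      exact (div_pos (aux_N_pos (by linarith)) (aux_D_pos hα (by linarith))).le
    · filter_upwards [eventually_ge_atTop (2:ℝ)] with x hx
      have hD := aux_D_pos hα (show (1:ℝ) < x by linarith)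
      exact (div_le_div_iff_of_pos_right hD).mpr (aux_N_upper hx)
end
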